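/- Let X be a topological space and E a Banach space. If f, g: X → E both have countable oscillation rank (β(f), β(g) < ω₁), then β(f + g) < ω₁. -/

import Mathlib

open Set Filter Ordinal ENNReal

universe u v

section Defs

variable {X : Type u} {E : Type v}

/-- `f` restricted to `A` is `ε`-fragmented: every nonempty subset of `A` has a relatively
open nonempty piece on which the oscillation (diameter of the image) of `f` is at most `ε`. -/
def EpsFragOn [TopologicalSpace X] [PseudoEMetricSpace E] (f : X → E) (A : Set X)
    (ε : ℝ≥0∞) : Prop :=
  ∀ F : Set X, F ⊆ A → F.Nonempty → ∃ V : Set X, IsOpen V ∧ (V ∩ F).Nonempty ∧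
    EMetric.diam (f '' (V ∩ F)) ≤ ε

/-- The fragmentability index `frag f = inf {ε > 0 : f is ε-fragmented}` (with `inf ∅ = ∞`). -/
noncomputable def fragIdx [TopologicalSpace X] [PseudoEMetricSpace E] (f : X → E) : ℝ≥0∞ :=
  sInf {ε | 0 < ε ∧ EpsFragOn f Set.univ ε}

/-- A set `H` is resolvable: every nonempty `A ⊆ X` has a relatively open nonempty piece
entirely inside `H` or entirely inside its complement. -/
def Resolvable [TopologicalSpace X] (H : Set X) : Prop :=
  ∀ A : Set X, A.Nonempty → ∃ U : Set X, IsOpen U ∧ (U ∩ A).Nonempty ∧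
    (U ∩ A ⊆ H ∨ U ∩ A ⊆ Hᶜ)

/-- The σ-fragmentability index by resolvable sets. -/
noncomputable def sfragIdx [TopologicalSpace X] [PseudoEMetricSpace E] (f : X → E) : ℝ≥0∞ :=
  sInf {ε | 0 < ε ∧ ∃ H : ℕ → Set X, (∀ n, Resolvable (H n)) ∧ (⋃ n, H n) = Set.univ ∧
    ∀ n, EpsFragOn f (H n) ε}

/-- `g` is constant on each set of some resolvable partition of `X`, i.e. on each difference
`U (γ+1) \ U γ` of an increasing transfinite sequence of open sets from `∅` to `X`,
continuous at limit ordinals. -/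
def ConstOnResolvablePartition [TopologicalSpace X] (g : X → E) : Prop :=
  ∃ (κ : Ordinal.{u}) (U : Ordinal.{u} → Set X),
    (∀ α, IsOpen (U α)) ∧ (∀ α β : Ordinal, α ≤ β → U α ⊆ U β) ∧
    U 0 = ∅ ∧ U κ = Set.univ ∧
    (∀ γ, γ ≤ κ → Order.IsSuccLimit γ → U γ = ⋃ α < γ, U α) ∧
    (∀ γ < κ, ∀ x ∈ U (γ + 1) \ U γ, ∀ y ∈ U (γ + 1) \ U γ, g x = g y)

/-- The transfinite derivation of open sets in the definition of the oscillation rank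
`β(f, ε)`:  `U 0 = ∅`, `U (α+1) = U α ∪ {x ∉ U α : ∃ open V ∋ x, diam f (V \ U α) < ε}`,
and unions at limit ordinals. -/
noncomputable def oscSet [TopologicalSpace X] [PseudoEMetricSpace E] (f : X → E)
    (ε : ℝ≥0∞) (o : Ordinal.{u}) : Set X :=
  Ordinal.limitRecOn o ∅
    (fun _ U => U ∪ {x | x ∉ U ∧ ∃ V : Set X, IsOpen V ∧ x ∈ V ∧
      EMetric.diam (f '' (V \ U)) < ε})
    (fun γ _ ih => ⋃ (β : Ordinal) (h : β < γ), ih β h)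

/-- `f` has countable oscillation rank: `β(f) < ω₁`, i.e. for every `ε > 0` the derivation
reaches `X` at some countable ordinal. -/
def CountableOscRank [TopologicalSpace X] [PseudoEMetricSpace E] (f : X → E) : Prop :=
  ∀ ε : ℝ≥0∞, 0 < ε → ∃ α < ω₁, oscSet f ε α = Set.univ

/-- A transfinite sequence `(V α)_{α ≤ κ}` of open sets has property `*(f, ε)`. -/
def StarProp [TopologicalSpace X] [PseudoEMetricSpace E] (f : X → E) (ε : ℝ≥0∞)
    (κ : Ordinal.{u}) (V : Ordinal.{u} → Set X) : Prop :=
  (∀ α, α ≤ κ → IsOpen (V α)) ∧ (∀ α β : Ordinal, α ≤ β → β ≤ κ → V α ⊆ V β) ∧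
  V 0 = ∅ ∧ V κ = Set.univ ∧
  (∀ γ, γ ≤ κ → Order.IsSuccLimit γ → V γ = ⋃ α < γ, V α) ∧
  (∀ α < κ, ∀ x ∈ V (α + 1) \ V α, ∃ W : Set X, IsOpen W ∧ x ∈ W ∧
    EMetric.diam (f '' (W \ V α)) < ε)

/-- Uniform distance `d(f, g) = sup_x ρ(f x, g x)` (in `[0, ∞]`). -/
noncomputable def unifDist [PseudoEMetricSpace E] (f g : X → E) : ℝ≥0∞ :=
  ⨆ x, edist (f x) (g x)

/-- Distance from `f` to the family of σ-fragmented mappings. -/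
noncomputable def distToSFrag [TopologicalSpace X] [PseudoEMetricSpace E] (f : X → E) : ℝ≥0∞ :=
  ⨅ (g : {g : X → E // sfragIdx g = 0}), unifDist f g.1

end Defs

section Aux

variable {X : Type u} {E : Type v} [TopologicalSpace X] [PseudoEMetricSpace E]

/-- derivative -/
def myDer (f : X → E) (ε : ℝ≥0∞) (F : Set X) : Set X :=
  {x | x ∈ F ∧ ¬ ∃ V : Set X, IsOpen V ∧ x ∈ V ∧ EMetric.diam (f '' (V ∩ F)) < ε}

noncomputable def myIt (f : X → E) (ε : ℝ≥0∞) (F : Set X) (o : Ordinal.{u}) : Set X :=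
  Ordinal.limitRecOn o F (fun _ S => myDer f ε S)
    (fun γ _ ih => ⋂ (β : Ordinal) (h : β < γ), ih β h)

@[simp] theorem myIt_zero (f : X → E) (ε : ℝ≥0∞) (F : Set X) : myIt f ε F 0 = F :=
  Ordinal.limitRecOn_zero _ _ _

@[simp] theorem myIt_succ (f : X → E) (ε : ℝ≥0∞) (F : Set X) (o : Ordinal.{u}) :
    myIt f ε F (o + 1) = myDer f ε (myIt f ε F o) :=
  Ordinal.limitRecOn_add_one _ _ _ _

theorem myIt_limit (f : X → E) (ε : ℝ≥0∞) (F : Set X) {o : Ordinal.{u}} (ho : Order.IsSuccLimit o) :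
    myIt f ε F o = ⋂ (β : Ordinal) (_ : β < o), myIt f ε F β :=
  Ordinal.limitRecOn_limit _ _ _ _ ho

theorem myDer_subset (f : X → E) (ε : ℝ≥0∞) (F : Set X) : myDer f ε F ⊆ F :=
  fun _ hx => hx.1

theorem myDer_mono (f : X → E) (ε : ℝ≥0∞) {F G : Set X} (h : F ⊆ G) :
    myDer f ε F ⊆ myDer f ε G := by
  rintro x ⟨hxF, hne⟩
  refine ⟨h hxF, fun ⟨V, hV, hxV, hd⟩ => hne ⟨V, hV, hxV, ?_⟩⟩
  exact lt_of_le_of_lt (EMetric.diam_mono (Set.image_mono (Set.inter_subset_inter_right _ h))) hd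

theorem myDer_inter_open (f : X → E) (ε : ℝ≥0∞) {F V : Set X} (hV : IsOpen V) :
    myDer f ε F ∩ V ⊆ myDer f ε (F ∩ V) := by
  rintro x ⟨⟨hxF, hne⟩, hxV⟩
  refine ⟨⟨hxF, hxV⟩, fun ⟨W, hW, hxW, hd⟩ => hne ⟨W ∩ V, hW.inter hV, ⟨hxW, hxV⟩, ?_⟩⟩
  refine lt_of_le_of_lt (EMetric.diam_mono (Set.image_mono ?_)) hd
  intro y hy; exact ⟨hy.1.1, hy.2, hy.1.2⟩

theorem myIt_subset (f : X → E) (ε : ℝ≥0∞) (F : Set X) (o : Ordinal.{u}) :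
    myIt f ε F o ⊆ F := by
  induction o using Ordinal.limitRecOn with
  | zero => simp
  | add_one o ih => rw [myIt_succ]; exact (myDer_subset _ _ _).trans ih
  | limit o ho ih =>
    rw [myIt_limit _ _ _ ho]
    intro x hx
    simp only [Set.mem_iInter] at hx
    exact ih 0 ho.pos (hx 0 ho.pos)

theorem myIt_mono (f : X → E) (ε : ℝ≥0∞) {F G : Set X} (h : F ⊆ G) (o : Ordinal.{u}) :
    myIt f ε F o ⊆ myIt f ε G o := by
  induction o using Ordinal.limitRecOn with
  | zero => simpa using h
  | add_one o ih => rw [myIt_succ, myIt_succ]; exact myDer_mono _ _ ih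
  | limit o ho ih =>
    rw [myIt_limit _ _ _ ho, myIt_limit _ _ _ ho]
    exact Set.iInter₂_mono fun β hβ => ih β hβ

theorem myIt_antitone (f : X → E) (ε : ℝ≥0∞) (F : Set X) {a b : Ordinal.{u}} (h : a ≤ b) :
    myIt f ε F b ⊆ myIt f ε F a := by
  induction b using Ordinal.limitRecOn with
  | zero => rw [nonpos_iff_eq_zero.mp h]
  | add_one o ih =>
    rcases eq_or_lt_of_le h with rfl | hlt
    · exact Set.Subset.rfl
    · rw [myIt_succ]
      exact (myDer_subset _ _ _).trans (ih (Order.lt_add_one_iff.mp hlt))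
  | limit o ho ih =>
    rcases eq_or_lt_of_le h with rfl | hlt
    · exact Set.Subset.rfl
    · rw [myIt_limit _ _ _ ho]
      exact Set.biInter_subset_of_mem hlt

theorem myIt_inter_open (f : X → E) (ε : ℝ≥0∞) {F V : Set X} (hV : IsOpen V)
    (o : Ordinal.{u}) : myIt f ε F o ∩ V ⊆ myIt f ε (F ∩ V) o := by
  induction o using Ordinal.limitRecOn with
  | zero => simp
  | add_one o ih =>
    rw [myIt_succ, myIt_succ]
    exact (myDer_inter_open f ε hV).trans (myDer_mono _ _ ih)
  | limit o ho ih =>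
    rw [myIt_limit _ _ _ ho, myIt_limit _ _ _ ho]
    rintro x ⟨hx, hxV⟩
    simp only [Set.mem_iInter] at hx ⊢
    exact fun β hβ => ih β hβ ⟨hx β hβ, hxV⟩

theorem myIt_add (f : X → E) (ε : ℝ≥0∞) (F : Set X) (a b : Ordinal.{u}) :
    myIt f ε F (a + b) ⊆ myIt f ε (myIt f ε F a) b := by
  induction b using Ordinal.limitRecOn with
  | zero => simp
  | add_one o ih =>
    rw [← add_assoc, myIt_succ, myIt_succ]
    exact myDer_mono _ _ ih
  | limit o ho ih =>
    rw [myIt_limit _ _ _ ho, myIt_limit _ _ _ (Ordinal.isSuccLimit_add a ho)]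
    intro x hx
    simp only [Set.mem_iInter] at hx ⊢
    intro β hβ
    exact ih β hβ (hx (a + β) ((add_lt_add_iff_left a).mpr hβ))

end Aux

set_option linter.unusedSectionVars false
section Sum
variable {X : Type u} {E : Type v} [TopologicalSpace X] [SeminormedAddCommGroup E]

theorem diam_image_add (f g : X → E) (S : Set X) :
    EMetric.diam ((fun x => f x + g x) '' S) ≤
      EMetric.diam (f '' S) + EMetric.diam (g '' S) := by
  apply EMetric.diam_le
  rintro _ ⟨x, hx, rfl⟩ _ ⟨y, hy, rfl⟩
  calc edist (f x + g x) (f y + g y) ≤ edist (f x) (f y) + edist (g x) (g y) :=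
        edist_add_add_le _ _ _ _
    _ ≤ _ := add_le_add
        (EMetric.edist_le_diam_of_mem (Set.mem_image_of_mem f hx) (Set.mem_image_of_mem f hy))
        (EMetric.edist_le_diam_of_mem (Set.mem_image_of_mem g hx) (Set.mem_image_of_mem g hy))

theorem small_g_der (f g : X → E) {ε : ℝ≥0∞} {G S : Set X}
    (hG : EMetric.diam (g '' G) < ε / 2) (hS : S ⊆ G) :
    myDer (fun x => f x + g x) ε S ⊆ myDer f (ε / 2) S := by
  rintro x ⟨hxS, hne⟩
  refine ⟨hxS, fun ⟨V, hV, hxV, hd⟩ => hne ⟨V, hV, hxV, ?_⟩⟩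
  calc EMetric.diam ((fun x => f x + g x) '' (V ∩ S))
      ≤ EMetric.diam (f '' (V ∩ S)) + EMetric.diam (g '' (V ∩ S)) := diam_image_add f g _
    _ < ε / 2 + ε / 2 := ENNReal.add_lt_add hd (lt_of_le_of_lt
        (EMetric.diam_mono (Set.image_mono ((Set.inter_subset_right).trans hS))) hG)
    _ = ε := ENNReal.add_halves ε

theorem small_g_iter (f g : X → E) {ε : ℝ≥0∞} {G : Set X}
    (hG : EMetric.diam (g '' G) < ε / 2) (o : Ordinal.{u}) :
    myIt (fun x => f x + g x) ε G o ⊆ myIt f (ε / 2) G o := by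
  induction o using Ordinal.limitRecOn with
  | zero => simp [myIt_zero]
  | add_one o ih =>
    rw [myIt_succ, myIt_succ]
    exact (small_g_der f g hG (myIt_subset _ _ _ _)).trans (myDer_mono _ _ ih)
  | limit o ho ih =>
    rw [myIt_limit _ _ _ ho, myIt_limit _ _ _ ho]
    exact Set.iInter₂_mono fun β hβ => ih β hβ

theorem keyA (f g : X → E) {ε : ℝ≥0∞} {a : Ordinal.{u}}
    (ha : myIt f (ε / 2) Set.univ a = ∅) (F : Set X) :
    myIt (fun x => f x + g x) ε F a ⊆ myDer g (ε / 2) F := by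
  intro x hx
  have hxF : x ∈ F := myIt_subset _ _ _ _ hx
  by_contra hx'
  have : ∃ V : Set X, IsOpen V ∧ x ∈ V ∧ EMetric.diam (g '' (V ∩ F)) < ε / 2 := by
    by_contra h
    exact hx' ⟨hxF, h⟩
  obtain ⟨V, hV, hxV, hd⟩ := this
  have h1 : x ∈ myIt (fun x => f x + g x) ε (F ∩ V) a :=
    myIt_inter_open _ _ hV a ⟨hx, hxV⟩
  have h2 : x ∈ myIt f (ε / 2) (F ∩ V) a := by
    refine small_g_iter f g ?_ a h1
    rwa [Set.inter_comm]
  have h3 : x ∈ myIt f (ε / 2) Set.univ a :=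
    myIt_mono _ _ (Set.subset_univ _) a h2
  rw [ha] at h3
  exact h3

theorem keyB (f g : X → E) {ε : ℝ≥0∞} {a : Ordinal.{u}} (ha0 : 0 < a)
    (ha : myIt f (ε / 2) Set.univ a = ∅) (γ : Ordinal.{u}) :
    myIt (fun x => f x + g x) ε Set.univ (a * γ) ⊆ myIt g (ε / 2) Set.univ γ := by
  induction γ using Ordinal.limitRecOn with
  | zero => simp [myIt_zero]
  | add_one γ ih =>
    rw [mul_add_one, myIt_succ]
    exact (myIt_add _ _ _ _ _).trans ((keyA f g ha _).trans (myDer_mono _ _ ih))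
  | limit γ hγ ih =>
    rw [myIt_limit _ _ _ (Ordinal.isSuccLimit_mul_right ha0 hγ), myIt_limit _ _ _ hγ]
    intro x hx
    simp only [Set.mem_iInter] at hx ⊢
    intro β hβ
    exact ih β hβ (hx (a * β) (mul_lt_mul_of_pos_left hβ ha0))

end Sum

open Cardinal in
theorem mul_lt_omega1' {a b : Ordinal.{u}} (ha : a < ω₁) (hb : b < ω₁) : a * b < ω₁ := by
  rw [← Cardinal.ord_aleph 1, Cardinal.lt_ord, ← Cardinal.succ_aleph0, Order.lt_succ_iff] at *
  rw [Ordinal.card_mul]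
  calc a.card * b.card ≤ ℵ₀ * ℵ₀ := mul_le_mul' ha hb
    _ = ℵ₀ := Cardinal.aleph0_mul_aleph0


section OscCompl
variable {X : Type u} {E : Type v} [TopologicalSpace X] [PseudoEMetricSpace E]

theorem oscSet_zero (f : X → E) (ε : ℝ≥0∞) : oscSet f ε 0 = ∅ :=
  Ordinal.limitRecOn_zero _ _ _

theorem oscSet_succ (f : X → E) (ε : ℝ≥0∞) (o : Ordinal.{u}) :
    oscSet f ε (o + 1) = oscSet f ε o ∪ {x | x ∉ oscSet f ε o ∧ ∃ V : Set X,
      IsOpen V ∧ x ∈ V ∧ EMetric.diam (f '' (V \ oscSet f ε o)) < ε} :=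
  Ordinal.limitRecOn_add_one _ _ _ _

theorem oscSet_limit (f : X → E) (ε : ℝ≥0∞) {o : Ordinal.{u}} (ho : Order.IsSuccLimit o) :
    oscSet f ε o = ⋃ (β : Ordinal) (_ : β < o), oscSet f ε β :=
  Ordinal.limitRecOn_limit _ _ _ _ ho

theorem oscSet_eq_compl (f : X → E) (ε : ℝ≥0∞) (o : Ordinal.{u}) :
    oscSet f ε o = (myIt f ε Set.univ o)ᶜ := by
  induction o using Ordinal.limitRecOn with
  | zero => rw [oscSet_zero, myIt_zero]; simp
  | add_one o ih =>
    rw [oscSet_succ, myIt_succ, ih]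
    ext x
    simp only [myDer, Set.mem_union, Set.mem_setOf_eq, Set.mem_compl_iff, Set.diff_eq,
      compl_compl, not_not, not_and]
    tauto
  | limit o ho ih =>
    rw [oscSet_limit f ε ho, myIt_limit f ε _ ho, Set.compl_iInter]
    exact Set.iUnion_congr fun β => by rw [Set.compl_iInter]; exact Set.iUnion_congr (ih β)

end OscCompl


/-- for a Banach space `E`, the sum of two maps of countable oscillation rank
has countable oscillation rank. -/
theorem stmt_15 {X E : Type*} [TopologicalSpace X] [NormedAddCommGroup E]
    [NormedSpace ℝ E] [CompleteSpace E]
    (f g : X → E) (hf : CountableOscRank f) (hg : CountableOscRank g) :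
    CountableOscRank (fun x => f x + g x) := by
  intro ε hε
  have hε2 : 0 < ε / 2 := ENNReal.half_pos hε.ne'
  obtain ⟨a, ha1, ha2⟩ := hf (ε / 2) hε2
  obtain ⟨b, hb1, hb2⟩ := hg (ε / 2) hε2
  rw [oscSet_eq_compl, Set.compl_univ_iff] at ha2 hb2
  have hω : Order.IsSuccLimit (ω₁ : Ordinal) := by
    exact Cardinal.isSuccLimit_omega 1
  have ha0 : (0 : Ordinal) < a + 1 := by
    rw [Ordinal.add_one_eq_succ]
    exact (zero_le : (0 : Ordinal) ≤ a).trans_lt (Order.lt_succ a)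
  have ha2' : myIt f (ε / 2) Set.univ (a + 1) = ∅ := by
    have h := myIt_antitone f (ε / 2) Set.univ (le_self_add : a ≤ a + 1)
    rw [ha2] at h
    exact Set.subset_empty_iff.mp h
  have ha1' : a + 1 < ω₁ := by
    rw [Ordinal.add_one_eq_succ]
    exact hω.succ_lt ha1
  refine ⟨(a + 1) * b, mul_lt_omega1' ha1' hb1, ?_⟩
  rw [oscSet_eq_compl, Set.compl_univ_iff]
  have h := keyB f g ha0 ha2' b
  rw [hb2] at h
  exact Set.subset_empty_iff.mp h
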